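/- Fix a length vector y ∈ (Z_+)^n and z ∈ Z_+. Every sequence c ∈ [z]^n (all preferences at most z) is a permutation-invariant parking sequence for (y;z): every rearrangement of c is a parking sequence for (y;z), and moreover the final parking configuration under c is the trailer followed by C_1,...,C_n in order. -/

import Mathlib

open Finset

/-- The first empty spot `j` with `c ≤ j ≤ M` (street spots are `1..M`). -/
def firstEmpty (occ : Finset ℕ) (M c : ℕ) : Option ℕ :=
  (List.range' c (M + 1 - c)).find? (fun j => decide (j ∉ occ))

/-- Park cars with preferences `cs` and lengths `ys` on a street with spots `1..M`,
where `occ` is the set of already-occupied spots.  Returns the list of starting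
spots of the cars (in order of entry) if all cars can park. -/
def parkAux (M : ℕ) : Finset ℕ → List ℕ → List ℕ → Option (List ℕ)
  | _, [], [] => some []
  | occ, c :: cs, y :: ys =>
    match firstEmpty occ M c with
    | none => none
    | some j =>
      if (∀ i ∈ Finset.Ico j (j + y), i ∉ occ) ∧ j + y - 1 ≤ M then
        (parkAux M (occ ∪ Finset.Ico j (j + y)) cs ys).map (j :: ·)
      else none
  | _, _, _ => none

/-- Outcome of the parking process for length vector `ys`, preference sequence `cs`,
and trailer parameter `z` (the trailer occupies spots `1,…,z-1`); the street has
`z - 1 + ys.sum` spots. -/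
def parkResult (ys cs : List ℕ) (z : ℕ) : Option (List ℕ) :=
  parkAux (z - 1 + ys.sum) (Finset.Ico 1 z) cs ys

/-- `cs` is a parking sequence for `(ys; z)`. -/
def IsParkingSeq (ys cs : List ℕ) (z : ℕ) : Prop :=
  cs.length = ys.length ∧ (∀ c ∈ cs, 1 ≤ c) ∧ (parkResult ys cs z).isSome = true

/-- Starting spots of the standard (no-gap, in order) final configuration. -/
def standardStarts (z : ℕ) : List ℕ → List ℕ
  | [] => []
  | y :: ys => z :: standardStarts (z + y) ys

/-- `cs` parks `ys` in the standard order `T, C₁, …, Cₙ`. -/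
def ParksStandard (ys cs : List ℕ) (z : ℕ) : Prop :=
  parkResult ys cs z = some (standardStarts z ys)

/-- `cs` is a permutation-invariant parking sequence for `(ys; z)`. -/
def PermInvariant (ys cs : List ℕ) (z : ℕ) : Prop :=
  ∀ cs' : List ℕ, cs'.Perm cs → IsParkingSeq ys cs' z

/-- `cs` is a strong parking sequence for `{ys; z}`. -/
def StrongParkingSeq (ys cs : List ℕ) (z : ℕ) : Prop :=
  ∀ ys' : List ℕ, ys'.Perm ys → IsParkingSeq ys' cs z

/-- The nondecreasing rearrangement (order statistics) of a list. -/
def orderStats (l : List ℕ) : List ℕ :=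
  Multiset.sort (l : Multiset ℕ) (· ≤ ·)

/-- `xs` is a `u`-parking function. -/
def IsUPF (u xs : List ℕ) : Prop :=
  xs.length = u.length ∧ (∀ x ∈ xs, 1 ≤ x) ∧
    ∀ i < u.length, (orderStats xs).getD i 0 ≤ u.getD i 0


lemma firstEmpty_Ico (t M c : ℕ) (hc1 : 1 ≤ c) (hct : c ≤ t) (htM : t ≤ M) :
    firstEmpty (Finset.Ico 1 t) M c = some t := by
  unfold firstEmpty
  have h : M + 1 - c = (M + 1 - t) + (t - c) := by omega
  have happ := @List.range'_append_1 c (t - c) (M + 1 - t)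
  rw [h, Nat.add_comm (M + 1 - t), ← happ, List.find?_append]
  have h1 : (List.range' c (t - c)).find? (fun j => decide (j ∉ Finset.Ico 1 t)) = none := by
    rw [List.find?_eq_none]
    intro j hj
    rw [List.mem_range'_1] at hj
    simp only [decide_eq_true_eq, Finset.mem_Ico, not_not]
    exact ⟨by omega, by omega⟩
  rw [h1, Option.none_or]
  have h2 : c + (t - c) = t := by omega
  rw [h2]
  have h3 : M + 1 - t = (M - t) + 1 := by omega
  rw [h3, List.range'_succ, List.find?_cons]
  simp

lemma parkAux_lemma (ys : List ℕ) : ∀ (cs : List ℕ) (t M : ℕ),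
    cs.length = ys.length → (∀ c ∈ cs, 1 ≤ c ∧ c ≤ t) → (∀ y ∈ ys, 0 < y) →
    1 ≤ t → t + ys.sum ≤ M + 1 →
    parkAux M (Finset.Ico 1 t) cs ys = some (standardStarts t ys) := by
  induction ys with
  | nil =>
    intro cs t M hlen _ _ _ _
    obtain rfl : cs = [] := List.length_eq_zero_iff.mp (by simpa using hlen)
    simp [parkAux, standardStarts]
  | cons y ys ih =>
    intro cs t M hlen hcs hys ht hM
    obtain ⟨c, cs', rfl⟩ : ∃ c cs', cs = c :: cs' := by
      cases cs with
      | nil => simp at hlen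
      | cons a l => exact ⟨a, l, rfl⟩
    have hy : 0 < y := hys y (by simp)
    have hsum : y + ys.sum = (y :: ys).sum := by simp
    have hc := hcs c (by simp)
    have htM : t ≤ M := by omega
    rw [parkAux, firstEmpty_Ico t M c hc.1 hc.2 htM]
    dsimp only
    have hcond : (∀ i ∈ Finset.Ico t (t + y), i ∉ Finset.Ico 1 t) ∧ t + y - 1 ≤ M := by
      constructor
      · intro i hi
        simp only [Finset.mem_Ico] at hi ⊢
        omega
      · omega
    rw [if_pos hcond]
    have hunion : Finset.Ico 1 t ∪ Finset.Ico t (t + y) = Finset.Ico 1 (t + y) := by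
      rw [Finset.Ico_union_Ico_eq_Ico ht (by omega)]
    rw [hunion, ih cs' (t + y) M (by simpa using hlen)
      (fun x hx => ⟨(hcs x (by simp [hx])).1, le_trans (hcs x (by simp [hx])).2 (by omega)⟩)
      (fun x hx => hys x (by simp [hx])) (by omega) (by simp at hM ⊢; omega)]
    simp [standardStarts]

theorem stmt6 (n z : ℕ) (hz : 0 < z) (ys cs : List ℕ)
    (hylen : ys.length = n) (hypos : ∀ y ∈ ys, 0 < y)
    (hclen : cs.length = n) (hc : ∀ c ∈ cs, 1 ≤ c ∧ c ≤ z) :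
    PermInvariant ys cs z ∧ ParksStandard ys cs z := by
  have key : ∀ cs' : List ℕ, cs'.length = n → (∀ c ∈ cs', 1 ≤ c ∧ c ≤ z) →
      parkResult ys cs' z = some (standardStarts z ys) := by
    intro cs' hlen' hc'
    unfold parkResult
    exact parkAux_lemma ys cs' z (z - 1 + ys.sum) (by omega) hc' hypos hz (by omega)
  constructor
  · intro cs' hperm
    have hlen' : cs'.length = n := by rw [hperm.length_eq, hclen]
    have hc' : ∀ c ∈ cs', 1 ≤ c ∧ c ≤ z := fun c hcm => hc c (hperm.mem_iff.mp hcm)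
    exact ⟨by omega, fun c hcm => (hc' c hcm).1, by rw [key cs' hlen' hc']; rfl⟩
  · exact key cs hclen hc
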